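/- For all real numbers a, b > 0 with a ≠ b and all v ∈ (0,1), one has a♯_v b ≤ (1−v)·(a♯_{v/2} b) + v·(a♯_{(1+v)/2} b) ≤ L_v(a,b). -/

import Mathlib

/-- The logarithmic mean of two positive reals. -/
noncomputable def logMean (a b : ℝ) : ℝ :=
  if a = b then a else (b - a) / (Real.log b - Real.log a)

/-- The identric mean of two positive reals. -/
noncomputable def idMean (a b : ℝ) : ℝ :=
  if a = b then a else Real.exp (-1) * (b ^ b / a ^ a) ^ (b - a)⁻¹

/-- The weighted arithmetic mean `a ∇_v b`. -/
def wArith (v a b : ℝ) : ℝ := (1 - v) * a + v * b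

/-- The weighted geometric mean `a ♯_v b`. -/
noncomputable def wGeom (v a b : ℝ) : ℝ := a ^ (1 - v) * b ^ v

/-- The weighted harmonic mean `a !_v b`. -/
noncomputable def wHarm (v a b : ℝ) : ℝ := ((1 - v) / a + v / b)⁻¹

/-- The weighted logarithmic mean `L_v(a,b)` (for `a ≠ b`, `v ∈ (0,1)`). -/
noncomputable def wLog (v a b : ℝ) : ℝ :=
  (1 / (Real.log a - Real.log b)) *
    (((1 - v) / v) * (a - a ^ (1 - v) * b ^ v) + (v / (1 - v)) * (a ^ (1 - v) * b ^ v - b))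

/-- The weighted identric mean `I_v(a,b)` (for `a ≠ b`, `v ∈ (0,1)`). -/
noncomputable def wId (v a b : ℝ) : ℝ :=
  Real.exp (-1) * wArith v a b ^ ((1 - 2 * v) * wArith v a b / (v * (1 - v) * (b - a))) *
    (b ^ (v * b / (1 - v)) / a ^ ((1 - v) * a / v)) ^ (b - a)⁻¹

/-- Geometric mean ≤ logarithmic mean, in exponential form, ordered case. -/
lemma exp_mid_le_div_of_lt {p q : ℝ} (h : q < p) :
    Real.exp ((p + q) / 2) ≤ (Real.exp p - Real.exp q) / (p - q) := by
  have hpq : 0 < p - q := sub_pos.mpr h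
  rw [le_div_iff₀ hpq]
  have ht : (0:ℝ) ≤ (p - q) / 2 := by linarith
  have hs := (Real.self_le_sinh_iff).mpr ht
  rw [Real.sinh_eq] at hs
  have key : p - q ≤ Real.exp ((p - q) / 2) - Real.exp (-((p - q) / 2)) := by
    nlinarith [hs]
  have h1 : Real.exp ((p + q) / 2) * Real.exp ((p - q) / 2) = Real.exp p := by
    rw [← Real.exp_add]; ring_nf
  have h2 : Real.exp ((p + q) / 2) * Real.exp (-((p - q) / 2)) = Real.exp q := by
    rw [← Real.exp_add]; ring_nf
  nlinarith [Real.exp_pos ((p + q) / 2), key]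

/-- Geometric mean ≤ logarithmic mean, in exponential form. -/
lemma exp_mid_le_div {p q : ℝ} (h : p ≠ q) :
    Real.exp ((p + q) / 2) ≤ (Real.exp p - Real.exp q) / (p - q) := by
  rcases h.lt_or_gt with h | h
  · have := exp_mid_le_div_of_lt h
    have heq : (Real.exp q - Real.exp p) / (q - p) = (Real.exp p - Real.exp q) / (p - q) := by
      rw [← neg_sub (Real.exp p), ← neg_sub p q, neg_div_neg_eq]
    rw [add_comm q p] at this
    linarith [heq ▸ this]
  · exact exp_mid_le_div_of_lt h

theorem wGeom_le_wLog_refinement (a b v : ℝ) (ha : 0 < a) (hb : 0 < b) (hab : a ≠ b)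
    (hv : v ∈ Set.Ioo (0 : ℝ) 1) :
    wGeom v a b ≤ (1 - v) * wGeom (v / 2) a b + v * wGeom ((1 + v) / 2) a b ∧
      (1 - v) * wGeom (v / 2) a b + v * wGeom ((1 + v) / 2) a b ≤ wLog v a b := by
  obtain ⟨hv0, hv1⟩ := hv
  set la := Real.log a with hla
  set lb := Real.log b with hlb
  have hgeom : ∀ w : ℝ, wGeom w a b = Real.exp ((1 - w) * la + w * lb) := by
    intro w
    rw [wGeom, Real.rpow_def_of_pos ha, Real.rpow_def_of_pos hb, ← Real.exp_add]
    rw [← hla, ← hlb]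
    ring_nf
  have hD : la ≠ lb := fun h => hab (by
    rw [← Real.exp_log ha, ← Real.exp_log hb, ← hla, ← hlb, h])
  set lG := (1 - v) * la + v * lb with hlG
  -- exponents of the two middle geometric means
  have hs : (1 - v / 2) * la + (v / 2) * lb = (la + lG) / 2 := by rw [hlG]; ring
  have ht : (1 - (1 + v) / 2) * la + ((1 + v) / 2) * lb = (lG + lb) / 2 := by rw [hlG]; ring
  have hlaG : la ≠ lG := by
    intro h
    apply hD
    have : v * la = v * lb := by rw [hlG] at h; linarith
    exact mul_left_cancel₀ (ne_of_gt hv0) this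
  have hlGb : lG ≠ lb := by
    intro h
    apply hD
    have : (1 - v) * la = (1 - v) * lb := by rw [hlG] at h; linarith
    exact mul_left_cancel₀ (by linarith) this
  constructor
  · -- first inequality: convexity of exp
    rw [hgeom, hgeom, hgeom, hs, ht]
    have := convexOn_exp.2 (Set.mem_univ ((la + lG) / 2)) (Set.mem_univ ((lG + lb) / 2))
      (by linarith : (0:ℝ) ≤ 1 - v) (le_of_lt hv0) (by ring)
    simp only [smul_eq_mul] at this
    calc Real.exp ((1 - v) * la + v * lb)
        = Real.exp ((1 - v) * ((la + lG) / 2) + v * ((lG + lb) / 2)) := by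
          congr 1; rw [hlG]; ring
      _ ≤ (1 - v) * Real.exp ((la + lG) / 2) + v * Real.exp ((lG + lb) / 2) := this
  · -- second inequality
    rw [hgeom, hgeom, hs, ht]
    have h1 := exp_mid_le_div hlaG
    have h2 := exp_mid_le_div hlGb
    have key : (1 - v) * ((Real.exp la - Real.exp lG) / (la - lG))
        + v * ((Real.exp lG - Real.exp lb) / (lG - lb)) = wLog v a b := by
      rw [wLog, Real.rpow_def_of_pos ha, Real.rpow_def_of_pos hb, ← Real.exp_add,
        ← Real.exp_log ha, ← Real.exp_log hb, Real.log_exp, Real.log_exp, ← hla, ← hlb]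
      have e1 : la - lG = v * (la - lb) := by rw [hlG]; ring
      have e2 : lG - lb = (1 - v) * (la - lb) := by rw [hlG]; ring
      have hDne : la - lb ≠ 0 := sub_ne_zero.mpr hD
      rw [e1, e2]
      have hGe : la * (1 - v) + lb * v = lG := by rw [hlG]; ring
      rw [hGe]
      have hvne : v ≠ 0 := ne_of_gt hv0
      have hv1ne : (1:ℝ) - v ≠ 0 := sub_ne_zero.mpr (by linarith)
      field_simp
    rw [← key]
    have hv1' : (0:ℝ) ≤ 1 - v := by linarith
    gcongr
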